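/- For P ∈ (ω_II, 1) where ω_II is the real root of P³ − P² + 2P − 1 = 0, the reduction δ_II(P) = (P³ − P² + 2P − 1)/((2 − P)(1 + P + P²)) satisfies δ_II(P) > δ_2(P) = (P² + P − 1)/(1 + P) for all P with ω_II < P < ρ, where ρ ≈ 0.66536 is the unique point in (0.6, 0.7) at which δ_II(ρ) = δ_2(ρ); equivalently δ_II(P) − δ_2(P) changes sign exactly once in (0.6, 0.7). -/
import Mathlib


/-- Comparison of the Type-II and Type-I (2-state) reductions: there is a unique
crossing point `ρ ∈ (0.6, 0.7)` of `δ_II` and `δ_2`, and `δ_II(P) > δ_2(P)` for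
`ω_II < P < ρ`, where `ω_II` is the real root of `P³ - P² + 2P - 1`. -/
theorem stmt8 (ω : ℝ) (hω : ω ∈ Set.Ioo (0:ℝ) 1)
    (hroot : ω^3 - ω^2 + 2*ω - 1 = 0) :
    ∃ ρ ∈ Set.Ioo (0.6:ℝ) 0.7,
      (ρ^3 - ρ^2 + 2*ρ - 1)/((2 - ρ)*(1 + ρ + ρ^2)) = (ρ^2 + ρ - 1)/(1 + ρ) ∧
      (∀ ρ' ∈ Set.Ioo (0.6:ℝ) 0.7,
        (ρ'^3 - ρ'^2 + 2*ρ' - 1)/((2 - ρ')*(1 + ρ' + ρ'^2)) = (ρ'^2 + ρ' - 1)/(1 + ρ') →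
        ρ' = ρ) ∧
      ∀ P : ℝ, ω < P → P < ρ →
        (P^2 + P - 1)/(1 + P) < (P^3 - P^2 + 2*P - 1)/((2 - P)*(1 + P + P^2)) := by
  set g : ℝ → ℝ := fun x => x^5 + x^4 - 3*x^3 - x^2 + 1 with hgdef
  have hd : ∀ x : ℝ, HasDerivAt g (5*x^4 + 4*x^3 - 9*x^2 - 2*x) x := by
    intro x
    have h1 := ((((hasDerivAt_pow 5 x).add (hasDerivAt_pow 4 x)).sub
      ((hasDerivAt_pow 3 x).const_mul 3)).sub (hasDerivAt_pow 2 x)).add_const 1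
    exact h1.congr_deriv (by push_cast; ring)
  have hcont : ContinuousOn g (Set.Icc (0.5:ℝ) 0.7) :=
    fun x _ => ((hd x).continuousAt).continuousWithinAt
  have hanti : StrictAntiOn g (Set.Icc (0.5:ℝ) 0.7) := by
    apply strictAntiOn_of_deriv_neg (convex_Icc _ _) hcont
    intro x hx
    rw [interior_Icc] at hx
    rw [(hd x).deriv]
    nlinarith [hx.1, hx.2, mul_pos (mul_pos (lt_trans (by norm_num) hx.1)
      (lt_trans (by norm_num) hx.1)) (lt_trans (by norm_num) hx.1)]
  have h06 : (0:ℝ) < g 0.6 := by norm_num [hgdef]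
  have h07 : g 0.7 < 0 := by norm_num [hgdef]
  have hiv := intermediate_value_Ioo' (by norm_num : (0.6:ℝ) ≤ 0.7)
    (hcont.mono (Set.Icc_subset_Icc (by norm_num) le_rfl))
  obtain ⟨ρ, hρmem, hgρ⟩ := hiv ⟨h07, h06⟩
  have hρIcc : ρ ∈ Set.Icc (0.5:ℝ) 0.7 := ⟨le_of_lt (lt_trans (by norm_num) hρmem.1),
    le_of_lt hρmem.2⟩
  have hω5 : (0.5:ℝ) < ω := by
    nlinarith [mul_pos (mul_pos hω.1 hω.1) (sub_pos.mpr hω.2)]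
  refine ⟨ρ, hρmem, ?_, ?_, ?_⟩
  · rw [div_eq_div_iff (by nlinarith [hρmem.1, hρmem.2] : (2 - ρ)*(1 + ρ + ρ^2) ≠ 0)
      (by nlinarith [hρmem.1] : (1:ℝ) + ρ ≠ 0)]
    have : ρ^5 + ρ^4 - 3*ρ^3 - ρ^2 + 1 = 0 := hgρ
    linear_combination this
  · intro ρ' hρ' heq
    rw [div_eq_div_iff (by nlinarith [hρ'.1, hρ'.2] : (2 - ρ')*(1 + ρ' + ρ'^2) ≠ 0)
      (by nlinarith [hρ'.1] : (1:ℝ) + ρ' ≠ 0)] at heq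
    have hgρ' : g ρ' = 0 := by
      show ρ'^5 + ρ'^4 - 3*ρ'^3 - ρ'^2 + 1 = 0
      linear_combination heq
    exact hanti.injOn ⟨le_of_lt (lt_trans (by norm_num) hρ'.1), le_of_lt hρ'.2⟩
      hρIcc (hgρ'.trans hgρ.symm)
  · intro P hωP hPρ
    have hP1 : (0.5:ℝ) < P := lt_trans hω5 hωP
    have hP2 : P < 0.7 := lt_trans hPρ hρmem.2
    have hgP : 0 < g P := by
      have := hanti ⟨le_of_lt hP1, le_of_lt hP2⟩ hρIcc hPρ
      rw [hgρ] at this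
      exact this
    have hgP' : 0 < P^5 + P^4 - 3*P^3 - P^2 + 1 := hgP
    rw [div_lt_div_iff₀ (by nlinarith : (0:ℝ) < 1 + P)
      (by nlinarith : (0:ℝ) < (2 - P)*(1 + P + P^2))]
    nlinarith [hgP']
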